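/- There exist nonzero vectors ξ, η ∈ ℂ² such that (η_i ξ_j + η_j ξ_i)/2 = δ_{ij} · (η_1ξ_1 + η_2ξ_2)/2 for all i, j ∈ {1,2}, where δ_{ij} is the Kronecker delta. Consequently the complexified symbol of the deviatoric symmetric gradient ℰ_d (namely η ⊙ ξ − ((η·ξ)/2)·Id, where η·ξ = Σ_k η_kξ_k is the bilinear dot product without conjugation) vanishes at a nonzero pair (ξ, η); that is, ℰ_d is not ℂ-elliptic in dimension n = 2. -/
import Mathlib

/-- The deviatoric symmetric gradient is not ℂ-elliptic in dimension `n = 2`: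
there are nonzero `ξ, η ∈ ℂ²` with `η ⊙ ξ = ((η·ξ)/2) · Id`, i.e.
`(η i * ξ j + η j * ξ i)/2 = δ_{ij} * (η 0 * ξ 0 + η 1 * ξ 1)/2` for all `i, j`. -/
theorem deviatoric_not_CElliptic_dim_two :
    ∃ ξ η : Fin 2 → ℂ, ξ ≠ 0 ∧ η ≠ 0 ∧
      ∀ i j : Fin 2,
        (η i * ξ j + η j * ξ i) / 2 =
          (if i = j then (1 : ℂ) else 0) * ((η 0 * ξ 0 + η 1 * ξ 1) / 2) := by
  refine ⟨![1, Complex.I], ![1, -Complex.I], ?_, ?_, ?_⟩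
  · intro h
    have := congrFun h 0
    simp at this
  · intro h
    have := congrFun h 0
    simp at this
  · intro i j
    fin_cases i <;> fin_cases j <;>
      simp [Complex.ext_iff]
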